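/- Let G and K be finite groups and f : G → K a map such that the number of pairs (x,y) ∈ G × G with f(x·y) = f(x)·f(y) is strictly greater than (7/9)·|G|². Define h(x) to be a value attaining the maximum, over z ∈ K, of #{y ∈ G : f(x·y)·f(y)⁻¹ = z}. Then for every x ∈ G, the number of y ∈ G with f(x·y)·f(y)⁻¹ = h(x) is strictly greater than (2/3)·|G|. -/

import Mathlib

private lemma stmt_1_arith1 (C S Bad nn : ℕ) (h1 : C + Bad = nn)
    (h2 : Bad ≤ (nn - S) + (nn - S)) (h3 : S ≤ nn) (h4 : 9 * S > 7 * nn) :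
    9 * C > 5 * nn := by omega

private lemma stmt_1_arith2 (C M n : ℕ) (hMn : M ≤ n) (h1 : 9 * C > 5 * (n * n))
    (h2 : C ≤ n * M) (h3 : C ≤ M * M + (n - M) * (n - M)) : 3 * M > 2 * n := by
  by_contra hcon
  push_neg at hcon
  set d := n - M with hd
  have hnd : n = M + d := by omega
  rcases le_or_gt M d with hle | hlt
  · nlinarith
  · have hM2d : M ≤ 2 * d := by omega
    have hdM : d ≤ M := le_of_lt hlt
    have hfact : (2 * M - d) * (2 * d - M) ≥ 0 := Nat.zero_le _
    have e1 : (2 * M - d) * (2 * d - M) + 2 * M * M + 2 * d * d = 5 * M * d := by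
      zify [hdM, hM2d, show d ≤ 2 * M by omega]
      ring
    nlinarith

theorem stmt_1 {G K : Type*} [Group G] [Group K] [Finite G] [Finite K]
    (f : G → K) (h : G → K)
    (hf : 9 * Nat.card {p : G × G // f (p.1 * p.2) = f p.1 * f p.2} > 7 * (Nat.card G) ^ 2)
    (hmaj : ∀ x : G, ∀ z : K,
      Nat.card {y : G // f (x * y) * (f y)⁻¹ = z} ≤
        Nat.card {y : G // f (x * y) * (f y)⁻¹ = h x}) :
    ∀ x : G, 3 * Nat.card {y : G // f (x * y) * (f y)⁻¹ = h x} > 2 * Nat.card G := by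
  cases nonempty_fintype G
  cases nonempty_fintype K
  classical
  intro x
  set g : G → K := fun y => f (x * y) * (f y)⁻¹ with hg
  set n := Fintype.card G with hn
  have hnc : Nat.card G = n := Nat.card_eq_fintype_card
  set N : K → ℕ := fun z => (Finset.univ.filter fun y => g y = z).card with hN
  have hNcard : ∀ z, Nat.card {y : G // f (x * y) * (f y)⁻¹ = z} = N z := by
    intro z; rw [Nat.card_eq_fintype_card, Fintype.card_subtype]
  set M := N (h x) with hM
  have hmax : ∀ z, N z ≤ M := fun z => by
    have := hmaj x z; rwa [hNcard, hNcard] at this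
  have hMle : M ≤ n := by
    calc M ≤ Finset.univ.card := Finset.card_filter_le _ _
    _ = n := rfl
  have huniv2 : (Finset.univ : Finset (G × G)).card = n * n := by
    rw [Finset.card_univ, Fintype.card_prod]
  -- the count of good pairs
  set S := (Finset.univ.filter fun p : G × G => f (p.1 * p.2) = f p.1 * f p.2).card with hS
  have hScard : Nat.card {p : G × G // f (p.1 * p.2) = f p.1 * f p.2} = S := by
    rw [Nat.card_eq_fintype_card, Fintype.card_subtype]
  have hSle : S ≤ n * n := by
    calc S ≤ (Finset.univ : Finset (G × G)).card := Finset.card_filter_le _ _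
    _ = n * n := huniv2
  have hfS : 9 * S > 7 * (n * n) := by
    rw [hScard, hnc, sq] at hf; exact hf
  -- complement count for good pairs
  have hcomplS : (Finset.univ.filter fun p : G × G =>
      ¬ f (p.1 * p.2) = f p.1 * f p.2).card = n * n - S := by
    have := Finset.card_filter_add_card_filter_not
      (s := (Finset.univ : Finset (G × G)))
      (p := fun p : G × G => f (p.1 * p.2) = f p.1 * f p.2)
    omega
  -- collision count
  set C := (Finset.univ.filter fun p : G × G => g p.1 = g p.2).card with hC
  have hCadd : C + (Finset.univ.filter fun p : G × G => ¬ g p.1 = g p.2).card = n * n := by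
    rw [hC, Finset.card_filter_add_card_filter_not, huniv2]
  -- C as a sum
  have hCsum : C = ∑ y : G, N (g y) := by
    rw [hC, Finset.card_filter, Fintype.sum_prod_type]
    refine Finset.sum_congr rfl fun y _ => ?_
    rw [hN]
    simp only [Finset.card_filter]
    refine Finset.sum_congr rfl fun z _ => ?_
    simp [eq_comm]
  -- bound C ≤ n * M
  have hC1 : C ≤ n * M := by
    rw [hCsum]
    calc ∑ y : G, N (g y) ≤ ∑ _y : G, M := Finset.sum_le_sum fun y _ => hmax _
    _ = n * M := by simp [hn, mul_comm]
  -- complement count for the majority value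
  have hcompl : (Finset.univ.filter fun y : G => ¬ g y = h x).card = n - M := by
    have := Finset.card_filter_add_card_filter_not
      (s := (Finset.univ : Finset G)) (p := fun y : G => g y = h x)
    have hM' : M = (Finset.univ.filter fun y : G => g y = h x).card := rfl
    have hu : (Finset.univ : Finset G).card = n := rfl
    omega
  -- bound C ≤ M*M + (n-M)*(n-M)
  have hC2 : C ≤ M * M + (n - M) * (n - M) := by
    rw [hCsum, ← Finset.sum_filter_add_sum_filter_not Finset.univ (fun y => g y = h x)]
    have h1 : ∑ y ∈ Finset.univ.filter (fun y : G => g y = h x), N (g y) = M * M := by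
      have hc : ∀ y ∈ Finset.univ.filter (fun y : G => g y = h x), N (g y) = M := by
        intro y hy; simp only [Finset.mem_filter] at hy; rw [hy.2]
      rw [Finset.sum_congr rfl hc, Finset.sum_const, smul_eq_mul]
    have h2 : ∑ y ∈ Finset.univ.filter (fun y : G => ¬ g y = h x), N (g y) ≤
        (n - M) * (n - M) := by
      have hb : ∀ y ∈ Finset.univ.filter (fun y : G => ¬ g y = h x), N (g y) ≤ n - M := by
        intro y hy; simp only [Finset.mem_filter, Finset.mem_univ, true_and] at hy
        rw [← hcompl]
        apply Finset.card_le_card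
        intro z hz
        simp only [Finset.mem_filter, Finset.mem_univ, true_and] at hz ⊢
        rw [hz]; exact hy
      calc ∑ y ∈ Finset.univ.filter (fun y : G => ¬ g y = h x), N (g y)
          ≤ ∑ _y ∈ Finset.univ.filter (fun y : G => ¬ g y = h x), (n - M) :=
            Finset.sum_le_sum hb
      _ = (n - M) * (n - M) := by rw [Finset.sum_const, smul_eq_mul, hcompl]
    omega
  -- lower bound on C via the hypothesis
  have key : ∀ p : G × G, f ((x * p.1) * (p.1⁻¹ * p.2)) = f (x * p.1) * f (p.1⁻¹ * p.2) →
      f (p.1 * (p.1⁻¹ * p.2)) = f p.1 * f (p.1⁻¹ * p.2) → g p.1 = g p.2 := by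
    intro p h1 h2
    have e1 : x * p.1 * (p.1⁻¹ * p.2) = x * p.2 := by group
    have e2 : p.1 * (p.1⁻¹ * p.2) = p.2 := by group
    rw [e1] at h1
    rw [e2] at h2
    show f (x * p.1) * (f p.1)⁻¹ = f (x * p.2) * (f p.2)⁻¹
    rw [h1, h2]
    group
  have hbij1 : (Finset.univ.filter fun p : G × G =>
      ¬ f ((x * p.1) * (p.1⁻¹ * p.2)) = f (x * p.1) * f (p.1⁻¹ * p.2)).card = n * n - S := by
    rw [← hcomplS]
    refine Finset.card_nbij' (fun p => (x * p.1, p.1⁻¹ * p.2))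
      (fun q => (x⁻¹ * q.1, (x⁻¹ * q.1) * q.2)) ?_ ?_ ?_ ?_
    · intro p hp
      simp only [Finset.mem_coe, Finset.mem_filter, Finset.mem_univ, true_and] at *
      exact hp
    · intro q hq
      simp only [Finset.mem_coe, Finset.mem_filter, Finset.mem_univ, true_and] at *
      have e1 : x * (x⁻¹ * q.1) = q.1 := by group
      have e2 : (x⁻¹ * q.1)⁻¹ * (x⁻¹ * q.1 * q.2) = q.2 := by group
      rw [e1, e2]
      exact hq
    · rintro ⟨p1, p2⟩ _
      simp only [Prod.mk.injEq]
      constructor <;> group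
    · rintro ⟨q1, q2⟩ _
      simp only [Prod.mk.injEq]
      constructor <;> group
  have hbij2 : (Finset.univ.filter fun p : G × G =>
      ¬ f (p.1 * (p.1⁻¹ * p.2)) = f p.1 * f (p.1⁻¹ * p.2)).card = n * n - S := by
    rw [← hcomplS]
    refine Finset.card_nbij' (fun p => (p.1, p.1⁻¹ * p.2))
      (fun q => (q.1, q.1 * q.2)) ?_ ?_ ?_ ?_
    · intro p hp
      simp only [Finset.mem_coe, Finset.mem_filter, Finset.mem_univ, true_and] at *
      exact hp
    · intro q hq
      simp only [Finset.mem_coe, Finset.mem_filter, Finset.mem_univ, true_and] at *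
      have e2 : q.1⁻¹ * (q.1 * q.2) = q.2 := by group
      rw [e2]
      exact hq
    · rintro ⟨p1, p2⟩ _
      simp only [Prod.mk.injEq]
      constructor <;> group
    · rintro ⟨q1, q2⟩ _
      simp only [Prod.mk.injEq]
      constructor <;> group
  have hsub : (Finset.univ.filter fun p : G × G => ¬ g p.1 = g p.2).card ≤
      (n * n - S) + (n * n - S) := by
    calc (Finset.univ.filter fun p : G × G => ¬ g p.1 = g p.2).card
        ≤ ((Finset.univ.filter fun p : G × G =>
            ¬ f ((x * p.1) * (p.1⁻¹ * p.2)) = f (x * p.1) * f (p.1⁻¹ * p.2)) ∪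
          (Finset.univ.filter fun p : G × G =>
            ¬ f (p.1 * (p.1⁻¹ * p.2)) = f p.1 * f (p.1⁻¹ * p.2))).card := by
          apply Finset.card_le_card
          intro p hp
          simp only [Finset.mem_filter, Finset.mem_union, Finset.mem_univ, true_and] at *
          by_contra hcon
          push_neg at hcon
          exact hp (key p hcon.1 hcon.2)
    _ ≤ (Finset.univ.filter fun p : G × G =>
            ¬ f ((x * p.1) * (p.1⁻¹ * p.2)) = f (x * p.1) * f (p.1⁻¹ * p.2)).card +
          (Finset.univ.filter fun p : G × G =>
            ¬ f (p.1 * (p.1⁻¹ * p.2)) = f p.1 * f (p.1⁻¹ * p.2)).card :=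
        Finset.card_union_le _ _
    _ = (n * n - S) + (n * n - S) := by rw [hbij1, hbij2]
  have hClb : 9 * C > 5 * (n * n) :=
    stmt_1_arith1 C S _ (n * n) hCadd hsub hSle hfS
  rw [hNcard, hnc]
  exact stmt_1_arith2 C M n hMle hClb hC1 hC2
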